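/- Let σ, ν, μ be Minkowski velocities with ⟨σ,ν⟩ > 0 and set β := Lp(σ,ν)μ. If the quantity 2⟨μ,σ⟩⟨β,σ⟩/c² − ⟨μ,β⟩ + c² is nonzero, then the boost parameter ν can be recovered from σ, β, μ by the inverse-velocity formula: ν = [(⟨μ,σ⟩ + ⟨β,σ⟩)·(μ − β) + (2⟨β,σ⟩²/c² + ⟨μ,β⟩ − c²)·σ] / (2⟨μ,σ⟩⟨β,σ⟩/c² − ⟨μ,β⟩ + c²). -/
import Mathlib


noncomputable section

/-- Minkowski bilinear form on ℝ⁴ with signature +−−−. -/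
def mink (u v : Fin 4 → ℝ) : ℝ := u 0 * v 0 - u 1 * v 1 - u 2 * v 2 - u 3 * v 3

/-- Passive covariant Lorentz boost determined by Minkowski velocities σ, ν. -/
def Lp (c : ℝ) (σ ν μ : Fin 4 → ℝ) : Fin 4 → ℝ :=
  μ - (mink μ (ν + σ) / mink σ (ν + σ)) • (ν + σ) + (2 * mink μ ν / c ^ 2) • σ

lemma mink_expand (μ ν σ x : Fin 4 → ℝ) (l t : ℝ) :
    mink (μ - l • (ν + σ) + t • σ) x
      = mink μ x - l * (mink ν x + mink σ x) + t * mink σ x := by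
  simp only [mink, Pi.add_apply, Pi.sub_apply, Pi.smul_apply, smul_eq_mul]
  ring

lemma mink_add_right (u v w : Fin 4 → ℝ) :
    mink u (v + w) = mink u v + mink u w := by
  simp only [mink, Pi.add_apply]; ring

lemma mink_comm (u v : Fin 4 → ℝ) : mink u v = mink v u := by
  simp only [mink]; ring

theorem inverse_velocity_formula (c : ℝ) (hc : 0 < c) (σ ν μ : Fin 4 → ℝ)
    (hσ : mink σ σ = c ^ 2) (hν : mink ν ν = c ^ 2) (hμ : mink μ μ = c ^ 2)
    (hσν : 0 < mink σ ν)
    (β : Fin 4 → ℝ) (hβ : β = Lp c σ ν μ)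
    (hden : 2 * mink μ σ * mink β σ / c ^ 2 - mink μ β + c ^ 2 ≠ 0) :
    ν = (2 * mink μ σ * mink β σ / c ^ 2 - mink μ β + c ^ 2)⁻¹ •
        ((mink μ σ + mink β σ) • (μ - β) +
          (2 * (mink β σ) ^ 2 / c ^ 2 + mink μ β - c ^ 2) • σ) := by
  have hc2 : c ^ 2 ≠ 0 := pow_ne_zero _ hc.ne'
  have hDval : mink σ (ν + σ) = mink σ ν + c ^ 2 := by
    rw [mink_add_right, hσ]
  have hD : mink σ (ν + σ) ≠ 0 := by
    rw [hDval]; positivity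
  set l := mink μ (ν + σ) / mink σ (ν + σ) with hl
  set t := 2 * mink μ ν / c ^ 2 with ht
  have hβ' : β = μ - l • (ν + σ) + t • σ := hβ
  have hlD : l * (mink σ ν + c ^ 2) = mink μ ν + mink μ σ := by
    rw [hl, ← hDval, div_mul_cancel₀ _ hD, mink_add_right]
  have htc : t * c ^ 2 = 2 * mink μ ν := by
    rw [ht]; field_simp
  have hβσ : mink β σ = mink μ ν := by
    rw [hβ', mink_expand, hσ, mink_comm ν σ]
    nlinarith [hlD, htc]
  have hμβ : mink μ β = c ^ 2 - l * (mink μ ν + mink μ σ) + t * mink μ σ := by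
    rw [mink_comm, hβ', mink_expand, hμ, mink_comm ν μ, mink_comm σ μ]
  have hk : 2 * mink μ σ * mink β σ / c ^ 2 - mink μ β + c ^ 2
      = l * (mink μ ν + mink μ σ) := by
    rw [hβσ, hμβ, ht]; field_simp; ring
  have hne : l * (mink μ ν + mink μ σ) ≠ 0 := hk ▸ hden
  have hsub : μ - β = l • (ν + σ) - t • σ := by
    rw [hβ']; abel
  have key : (mink μ σ + mink β σ) • (μ - β) +
      (2 * (mink β σ) ^ 2 / c ^ 2 + mink μ β - c ^ 2) • σ
      = (l * (mink μ ν + mink μ σ)) • ν := by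
    rw [hβσ, hμβ, hsub, ht]
    match_scalars <;> field_simp <;> ring
  rw [hk, key, inv_smul_smul₀ hne]
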